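/- Let Z be an abelian group, let B ⊆ Z be finite and nonempty, and let G₁ ⊆ B × B be nonempty. Then there exist a set G ⊆ G₁ and a real number λ ≥ |G₁| / (2|−(G₁)|) such that: (i) λ ≤ |B[x]| ≤ 2λ for every x ∈ −(G); (ii) |G| ≥ |G₁| / (2 (1 + log₂(2|B| · |−(G₁)| / |G₁|))); (iii) |−(G)| ≥ |G| / (2λ); and (iv) E(B) ≥ λ |G| / (2 |B|³). -/

import Mathlib

open Finset Pointwise

/-- The additive energy `E(B) = |B|⁻³ · |{(b₁,b₂,b₃,b₄) ∈ B⁴ : b₁ − b₂ = b₃ − b₄}|`. -/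
noncomputable def energy {Z : Type*} [AddCommGroup Z] [DecidableEq Z] (A : Finset Z) : ℝ :=
  (((A ×ˢ A ×ˢ A ×ˢ A).filter
      (fun x => x.1 - x.2.1 = x.2.2.1 - x.2.2.2)).card : ℝ) / (A.card : ℝ) ^ 3

/-- `B[t] = (B + t) ∩ B`. -/
def shiftInter {Z : Type*} [AddCommGroup Z] [DecidableEq Z] (B : Finset Z) (t : Z) : Finset Z :=
  (B.image (fun b => b + t)) ∩ B

lemma mem_shiftInter' {Z : Type*} [AddCommGroup Z] [DecidableEq Z]
    (B : Finset Z) (x a : Z) : a ∈ shiftInter B x ↔ a ∈ B ∧ a - x ∈ B := by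
  simp only [shiftInter, Finset.mem_inter, Finset.mem_image]
  constructor
  · rintro ⟨⟨b, hb, rfl⟩, h2⟩
    exact ⟨h2, by simpa using hb⟩
  · rintro ⟨h1, h2⟩
    exact ⟨⟨a - x, h2, by abel⟩, h1⟩

lemma fiber_card_le {Z : Type*} [AddCommGroup Z] [DecidableEq Z]
    (B : Finset Z) (S : Finset (Z × Z)) (hS : S ⊆ B ×ˢ B) (x : Z) :
    (S.filter (fun p => p.1 - p.2 = x)).card ≤ (shiftInter B x).card := by
  apply Finset.card_le_card_of_injOn (fun p => p.1)
  · intro p hp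
    rw [Finset.mem_coe, Finset.mem_filter] at hp
    have hB := Finset.mem_product.1 (hS hp.1)
    rw [Finset.mem_coe, mem_shiftInter']
    refine ⟨hB.1, ?_⟩
    rw [← hp.2]
    simpa using hB.2
  · intro p hp q hq h
    rw [Finset.mem_coe, Finset.mem_filter] at hp hq
    have hp2 : p.2 = p.1 - x := by rw [← hp.2]; abel
    have hq2 : q.2 = q.1 - x := by rw [← hq.2]; abel
    exact Prod.ext h (by rw [hp2, hq2]; simp only at h; rw [h])


set_option maxHeartbeats 2000000 in
set_option maxRecDepth 10000 in
/-- For nonempty `G₁ ⊆ B × B` there are `G ⊆ G₁` and `λ ≥ |G₁|/(2|−(G₁)|)` with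
`λ ≤ |B[x]| ≤ 2λ` on `−(G)`, `|G| ≥ |G₁|/(2(1 + log₂(2|B||−(G₁)|/|G₁|)))`,
`|−(G)| ≥ |G|/(2λ)` and `E(B) ≥ λ|G|/(2|B|³)`. -/
theorem statement13 {Z : Type*} [AddCommGroup Z] [DecidableEq Z]
    (B : Finset Z) (hB : B.Nonempty) (G₁ : Finset (Z × Z)) (hG₁ : G₁.Nonempty)
    (hG₁B : G₁ ⊆ B ×ˢ B) :
    ∃ (G : Finset (Z × Z)) (lam : ℝ), G ⊆ G₁ ∧
      ((G₁.card : ℝ) / (2 * ((G₁.image (fun p => p.1 - p.2)).card : ℝ)) ≤ lam) ∧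
      (∀ x ∈ G.image (fun p => p.1 - p.2),
        lam ≤ ((shiftInter B x).card : ℝ) ∧ ((shiftInter B x).card : ℝ) ≤ 2 * lam) ∧
      (G₁.card : ℝ) / (2 * (1 + Real.logb 2
        (2 * (B.card : ℝ) * ((G₁.image (fun p => p.1 - p.2)).card : ℝ) / (G₁.card : ℝ))))
        ≤ (G.card : ℝ) ∧
      (G.card : ℝ) / (2 * lam) ≤ ((G.image (fun p => p.1 - p.2)).card : ℝ) ∧
      lam * (G.card : ℝ) / (2 * (B.card : ℝ) ^ 3) ≤ energy B := by
  classical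
  have hd0 : (0:ℝ) < ((G₁.image (fun p => p.1 - p.2)).card : ℝ) := by
    exact_mod_cast (hG₁.image _).card_pos
  have hm0 : (0:ℝ) < (G₁.card : ℝ) := by exact_mod_cast hG₁.card_pos
  have hn0 : (0:ℝ) < (B.card : ℝ) := by exact_mod_cast hB.card_pos
  set lam0 : ℝ := (G₁.card : ℝ) / (2 * ((G₁.image (fun p => p.1 - p.2)).card : ℝ)) with hlam0def
  have hlam00 : 0 < lam0 := by positivity
  -- real-valued fiber sum identity
  have hsum : ∀ S : Finset (Z × Z), (S.card : ℝ)
      = ∑ x ∈ S.image (fun p => p.1 - p.2),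
        (((S.filter fun p => p.1 - p.2 = x).card : ℝ)) := by
    intro S
    exact_mod_cast Finset.card_eq_sum_card_image (fun p => p.1 - p.2) S
  have hcn : ∀ x : Z, ((shiftInter B x).card : ℝ) ≤ (B.card : ℝ) := by
    intro x
    exact_mod_cast Finset.card_le_card (Finset.inter_subset_right)
  -- m ≤ n * d
  have hmnd : (G₁.card : ℝ) ≤ (B.card : ℝ) * ((G₁.image (fun p => p.1 - p.2)).card : ℝ) := by
    calc (G₁.card : ℝ) = _ := hsum G₁
      _ ≤ ∑ _x ∈ G₁.image (fun p => p.1 - p.2), (B.card : ℝ) := by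
          apply Finset.sum_le_sum
          intro x _
          calc (((G₁.filter fun p => p.1 - p.2 = x).card : ℝ))
              ≤ ((shiftInter B x).card : ℝ) := by exact_mod_cast fiber_card_le B G₁ hG₁B x
            _ ≤ (B.card : ℝ) := hcn x
      _ = ((G₁.image (fun p => p.1 - p.2)).card : ℝ) * (B.card : ℝ) := by
          rw [Finset.sum_const, nsmul_eq_mul]
      _ = _ := mul_comm _ _
  -- the "good" pairs
  set Good := G₁.filter (fun p => lam0 ≤ ((shiftInter B (p.1 - p.2)).card : ℝ)) with hGoodDef
  have hGoodsub : Good ⊆ G₁ := Finset.filter_subset _ _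
  have hGoodcard : (G₁.card : ℝ) ≤ 2 * (Good.card : ℝ) := by
    set Bad := G₁.filter (fun p => ¬ lam0 ≤ ((shiftInter B (p.1 - p.2)).card : ℝ)) with hBadDef
    have hsplit : Good.card + Bad.card = G₁.card :=
      Finset.card_filter_add_card_filter_not _
    have hBadB : Bad ⊆ B ×ˢ B := (Finset.filter_subset _ _).trans hG₁B
    have hBadle : (Bad.card : ℝ) ≤ (G₁.card : ℝ) / 2 := by
      have h1 := hsum Bad
      have h2 : ∀ x ∈ Bad.image (fun p => p.1 - p.2),
          (((Bad.filter fun p => p.1 - p.2 = x).card : ℝ)) ≤ lam0 := by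
        intro x hx
        obtain ⟨p, hp, rfl⟩ := Finset.mem_image.1 hx
        rw [hBadDef, Finset.mem_filter] at hp
        have hlt : ((shiftInter B (p.1 - p.2)).card : ℝ) < lam0 := lt_of_not_ge hp.2
        have hle : (((Bad.filter fun q => q.1 - q.2 = p.1 - p.2).card : ℝ))
            ≤ ((shiftInter B (p.1 - p.2)).card : ℝ) := by
          exact_mod_cast fiber_card_le B Bad hBadB (p.1 - p.2)
        linarith
      have h3 : ((Bad.image (fun p => p.1 - p.2)).card : ℝ)
          ≤ ((G₁.image (fun p => p.1 - p.2)).card : ℝ) := by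
        exact_mod_cast Finset.card_le_card
          (Finset.image_subset_image (Finset.filter_subset _ _))
      calc (Bad.card : ℝ) = _ := h1
        _ ≤ ∑ _x ∈ Bad.image (fun p => p.1 - p.2), lam0 := Finset.sum_le_sum h2
        _ = ((Bad.image (fun p => p.1 - p.2)).card : ℝ) * lam0 := by
            rw [Finset.sum_const, nsmul_eq_mul]
        _ ≤ ((G₁.image (fun p => p.1 - p.2)).card : ℝ) * lam0 :=
            mul_le_mul_of_nonneg_right h3 hlam00.le
        _ = (G₁.card : ℝ) / 2 := by
            rw [hlam0def]
            rw [mul_div_assoc', mul_comm 2, ← div_div, mul_div_cancel_left₀ _ hd0.ne']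
    have hsplit' : (Good.card : ℝ) + (Bad.card : ℝ) = (G₁.card : ℝ) := by exact_mod_cast hsplit
    linarith
  -- q and the number of dyadic classes J
  set q : ℝ := (B.card : ℝ) / lam0 with hqdef
  have hqeq : q = 2 * (B.card : ℝ) * ((G₁.image (fun p => p.1 - p.2)).card : ℝ) / (G₁.card : ℝ) := by
    rw [hqdef, hlam0def]
    rw [div_div_eq_mul_div]
    ring
  have hq2 : (2:ℝ) ≤ q := by
    rw [hqeq, le_div_iff₀ hm0]
    nlinarith
  have hq0 : (0:ℝ) < q := lt_of_lt_of_le two_pos hq2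
  set t := Real.logb 2 q with htdef
  have ht1 : (1:ℝ) ≤ t := by
    rw [htdef]
    calc (1:ℝ) = Real.logb 2 2 := by rw [Real.logb_self_eq_one] <;> norm_num
      _ ≤ Real.logb 2 q := Real.logb_le_logb_of_le one_lt_two two_pos hq2
  set J := Nat.floor t + 1 with hJdef
  have hJ0 : 0 < J := Nat.succ_pos _
  have hJ0' : (0:ℝ) < (J:ℝ) := by exact_mod_cast hJ0
  have hJt : (J:ℝ) ≤ 1 + t := by
    have := Nat.floor_le (le_trans zero_le_one ht1)
    rw [hJdef]
    push_cast
    linarith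
  have hqJ : q < 2 ^ J := by
    have h1 : t < (J:ℝ) := by
      rw [hJdef]; push_cast; exact Nat.lt_floor_add_one t
    calc q = (2:ℝ) ^ t := (Real.rpow_logb two_pos (by norm_num) hq0).symm
      _ < (2:ℝ) ^ ((J:ℝ)) := (Real.rpow_lt_rpow_left_iff (by norm_num)).2 h1
      _ = 2 ^ J := by rw [Real.rpow_natCast]
  -- dyadic classes
  set Gc : ℕ → Finset (Z × Z) := fun j => Good.filter
    (fun p => lam0 * 2 ^ j ≤ ((shiftInter B (p.1 - p.2)).card : ℝ)
      ∧ ((shiftInter B (p.1 - p.2)).card : ℝ) < lam0 * 2 ^ (j+1)) with hGcDef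
  have hGcMem : ∀ (j : ℕ) (p : Z × Z), p ∈ Gc j ↔ p ∈ Good ∧
      (lam0 * 2 ^ j ≤ ((shiftInter B (p.1 - p.2)).card : ℝ)
        ∧ ((shiftInter B (p.1 - p.2)).card : ℝ) < lam0 * 2 ^ (j+1)) := by
    intro j p
    rw [hGcDef]
    exact Finset.mem_filter
  -- coverage
  have hcover : Good = (Finset.range J).biUnion Gc := by
    apply Finset.Subset.antisymm
    · intro p hp
      have hpc : lam0 ≤ ((shiftInter B (p.1 - p.2)).card : ℝ) := (Finset.mem_filter.1 hp).2
      set cp := ((shiftInter B (p.1 - p.2)).card : ℝ) with hcp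
      have hcp0 : 0 < cp := lt_of_lt_of_le hlam00 hpc
      have hu1 : (1:ℝ) ≤ cp / lam0 := (one_le_div hlam00).2 hpc
      have hu0 : (0:ℝ) < cp / lam0 := lt_of_lt_of_le one_pos hu1
      have hs0 : 0 ≤ Real.logb 2 (cp / lam0) := Real.logb_nonneg one_lt_two hu1
      set j := Nat.floor (Real.logb 2 (cp / lam0)) with hj
      have hlow : (2:ℝ) ^ j ≤ cp / lam0 := by
        have h1 : ((j:ℝ)) ≤ Real.logb 2 (cp / lam0) := by rw [hj]; exact Nat.floor_le hs0
        calc (2:ℝ) ^ j = (2:ℝ) ^ ((j:ℝ)) := (Real.rpow_natCast 2 j).symm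
          _ ≤ (2:ℝ) ^ Real.logb 2 (cp / lam0) := (Real.rpow_le_rpow_left_iff (by norm_num)).2 h1
          _ = cp / lam0 := Real.rpow_logb two_pos (by norm_num) hu0
      have hhigh : cp / lam0 < (2:ℝ) ^ (j+1) := by
        have h1 : Real.logb 2 (cp / lam0) < ((j:ℝ) + 1) := by
          rw [hj]; exact Nat.lt_floor_add_one _
        calc cp / lam0 = (2:ℝ) ^ Real.logb 2 (cp / lam0) :=
              (Real.rpow_logb two_pos (by norm_num) hu0).symm
          _ < (2:ℝ) ^ ((j:ℝ) + 1) := (Real.rpow_lt_rpow_left_iff (by norm_num)).2 h1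
          _ = (2:ℝ) ^ (((j+1 : ℕ)):ℝ) := by push_cast; ring_nf
          _ = (2:ℝ) ^ (j+1) := Real.rpow_natCast 2 (j+1)
      have hjJ : j < J := by
        by_contra hcon
        push_neg at hcon
        have h1 : (2:ℝ) ^ J ≤ 2 ^ j := pow_le_pow_right₀ one_le_two hcon
        have h2 : cp / lam0 ≤ q := by
          rw [hqdef, hcp, div_le_div_iff₀ hlam00 hlam00]
          nlinarith [hcn (p.1 - p.2), hlam00]
        linarith
      refine Finset.mem_biUnion.2 ⟨j, Finset.mem_range.2 hjJ, ?_⟩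
      rw [hGcMem]
      refine ⟨hp, ?_, ?_⟩
      · calc lam0 * 2 ^ j ≤ lam0 * (cp / lam0) :=
            mul_le_mul_of_nonneg_left hlow hlam00.le
          _ = cp := by field_simp
      · calc cp = lam0 * (cp / lam0) := by field_simp
          _ < lam0 * 2 ^ (j+1) := (mul_lt_mul_iff_right₀ hlam00).2 hhigh
    · intro p hp
      obtain ⟨j, _, hpj⟩ := Finset.mem_biUnion.1 hp
      exact ((hGcMem j p).1 hpj).1
  -- disjointness
  have hdisj : ∀ i ∈ Finset.range J, ∀ jj ∈ Finset.range J, i ≠ jj → Disjoint (Gc i) (Gc jj) := by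
    intro i _ jj _ hij
    rw [Finset.disjoint_left]
    intro p hpi hpj
    rw [hGcMem] at hpi hpj
    rcases hij.lt_or_gt with h | h
    · have h2 : (2:ℝ) ^ (i+1) ≤ 2 ^ jj := pow_le_pow_right₀ one_le_two h
      have h3 : lam0 * 2 ^ (i+1) ≤ lam0 * 2 ^ jj := mul_le_mul_of_nonneg_left h2 hlam00.le
      linarith [hpi.2.2, hpj.2.1]
    · have h2 : (2:ℝ) ^ (jj+1) ≤ 2 ^ i := pow_le_pow_right₀ one_le_two h
      have h3 : lam0 * 2 ^ (jj+1) ≤ lam0 * 2 ^ i := mul_le_mul_of_nonneg_left h2 hlam00.le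
      linarith [hpj.2.2, hpi.2.1]
  have hcardsum : Good.card = ∑ j ∈ Finset.range J, (Gc j).card := by
    rw [hcover]
    exact Finset.card_biUnion hdisj
  -- pigeonhole
  have hex : ∃ j ∈ Finset.range J, (Good.card : ℝ) / (J:ℝ) ≤ ((Gc j).card : ℝ) := by
    apply Finset.exists_le_of_sum_le (Finset.nonempty_range_iff.2 hJ0.ne')
    rw [Finset.sum_const, nsmul_eq_mul, Finset.card_range]
    have he1 : (J:ℝ) * ((Good.card:ℝ) / (J:ℝ)) = (Good.card : ℝ) := by
      rw [mul_div_assoc', mul_div_cancel_left₀ _ hJ0'.ne']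
    rw [he1]
    exact_mod_cast hcardsum.le
  obtain ⟨j, _, hjcard⟩ := hex
  set lam := lam0 * 2 ^ j with hlamdef
  have hlampos : 0 < lam := mul_pos hlam00 (pow_pos two_pos _)
  have hGsub : Gc j ⊆ G₁ := by
    intro p hp
    exact hGoodsub ((hGcMem j p).1 hp).1
  have hGB : Gc j ⊆ B ×ˢ B := hGsub.trans hG₁B
  -- property (i)
  have hG3 : ∀ x ∈ (Gc j).image (fun p => p.1 - p.2),
      lam ≤ ((shiftInter B x).card : ℝ) ∧ ((shiftInter B x).card : ℝ) ≤ 2 * lam := by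
    intro x hx
    obtain ⟨p, hp, rfl⟩ := Finset.mem_image.1 hx
    have hp' := (hGcMem j p).1 hp
    constructor
    · rw [hlamdef]; exact hp'.2.1
    · have h1 := hp'.2.2
      have h2 : lam0 * 2 ^ (j+1) = 2 * lam := by rw [hlamdef]; ring
      linarith
  -- property (iii)
  have hG5 : ((Gc j).card : ℝ) / (2 * lam) ≤ (((Gc j).image (fun p => p.1 - p.2)).card : ℝ) := by
    rw [div_le_iff₀ (mul_pos two_pos hlampos)]
    calc ((Gc j).card : ℝ) = _ := hsum (Gc j)
      _ ≤ ∑ x ∈ (Gc j).image (fun p => p.1 - p.2), 2 * lam := by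
          apply Finset.sum_le_sum
          intro x hx
          calc ((((Gc j).filter fun p => p.1 - p.2 = x).card : ℝ))
              ≤ ((shiftInter B x).card : ℝ) := by
                exact_mod_cast fiber_card_le B (Gc j) hGB x
            _ ≤ 2 * lam := (hG3 x hx).2
      _ = (((Gc j).image (fun p => p.1 - p.2)).card : ℝ) * (2 * lam) := by
          rw [Finset.sum_const, nsmul_eq_mul]
  refine ⟨Gc j, lam, hGsub, ?_, hG3, ?_, hG5, ?_⟩
  · -- lam0 ≤ lam
    rw [hlamdef]
    have h1 : (1:ℝ) ≤ 2 ^ j := one_le_pow₀ one_le_two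
    nlinarith
  · -- property (ii)
    rw [← hqeq, ← htdef]
    have h1 : (G₁.card : ℝ) / (2 * (1 + t)) ≤ (G₁.card : ℝ) / (2 * (J:ℝ)) := by
      rw [div_le_div_iff₀ (by linarith) (mul_pos two_pos hJ0')]
      nlinarith
    have h2 : (G₁.card : ℝ) / (2 * (J:ℝ)) ≤ (Good.card : ℝ) / (J:ℝ) := by
      rw [div_le_div_iff₀ (by positivity) hJ0']
      nlinarith
    linarith
  · -- property (iv)
    set T := ((B ×ˢ B ×ˢ B ×ˢ B).filter
      (fun x => x.1 - x.2.1 = x.2.2.1 - x.2.2.2)) with hTdef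
    have hE : energy B = (T.card : ℝ) / (B.card : ℝ) ^ 3 := by rw [hTdef, energy]
    set Gim := (Gc j).image (fun p => p.1 - p.2) with hGimDef
    set U := Gim.biUnion (fun x => ((shiftInter B x) ×ˢ (shiftInter B x)).image
      (fun ac => (ac.1, (ac.1 - x, (ac.2, ac.2 - x))))) with hUdef
    have hUsub : U ⊆ T := by
      intro y hy
      obtain ⟨x, _, hy2⟩ := Finset.mem_biUnion.1 hy
      obtain ⟨ac, hac, rfl⟩ := Finset.mem_image.1 hy2
      obtain ⟨h1, h2⟩ := Finset.mem_product.1 hac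
      rw [mem_shiftInter'] at h1 h2
      rw [hTdef, Finset.mem_filter]
      constructor
      · refine Finset.mem_product.2 ⟨h1.1, Finset.mem_product.2 ⟨h1.2,
          Finset.mem_product.2 ⟨h2.1, h2.2⟩⟩⟩
      · show ac.1 - (ac.1 - x) = ac.2 - (ac.2 - x)
        abel
    have hdisjU : ∀ x ∈ Gim, ∀ y ∈ Gim, x ≠ y →
        Disjoint (((shiftInter B x) ×ˢ (shiftInter B x)).image
          (fun ac => (ac.1, (ac.1 - x, (ac.2, ac.2 - x)))))
          (((shiftInter B y) ×ˢ (shiftInter B y)).image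
          (fun ac => (ac.1, (ac.1 - y, (ac.2, ac.2 - y))))) := by
      intro x _ y _ hxy
      rw [Finset.disjoint_left]
      intro a hax hay
      obtain ⟨ac, _, rfl⟩ := Finset.mem_image.1 hax
      obtain ⟨bd, _, hbd⟩ := Finset.mem_image.1 hay
      simp only [Prod.ext_iff] at hbd
      apply hxy
      have e1 : bd.1 = ac.1 := hbd.1
      have e2 : bd.1 - y = ac.1 - x := hbd.2.1
      rw [e1] at e2
      exact (sub_right_inj.1 e2).symm
    have hcardU : U.card = ∑ x ∈ Gim, ((shiftInter B x).card) ^ 2 := by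
      rw [hUdef, Finset.card_biUnion hdisjU]
      apply Finset.sum_congr rfl
      intro x _
      rw [Finset.card_image_of_injOn, Finset.card_product, sq]
      intro a _ b _ h
      simp only [Prod.ext_iff] at h
      exact Prod.ext h.1 h.2.2.1
    have hTlow : lam * ((Gc j).card : ℝ) / 2 ≤ (T.card : ℝ) := by
      have hUT : (U.card : ℝ) ≤ (T.card : ℝ) := by
        exact_mod_cast Finset.card_le_card hUsub
      have hUeq : (U.card : ℝ) = ∑ x ∈ Gim, (((shiftInter B x).card : ℝ)) ^ 2 := by
        rw [hcardU]; push_cast; ring_nf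
      calc lam * ((Gc j).card : ℝ) / 2 = (((Gc j).card : ℝ) / (2 * lam)) * lam ^ 2 := by
            rw [div_mul_eq_mul_div, div_eq_div_iff two_ne_zero (mul_pos two_pos hlampos).ne']; ring
        _ ≤ (Gim.card : ℝ) * lam ^ 2 := by
            exact mul_le_mul_of_nonneg_right hG5 (sq_nonneg _)
        _ = ∑ _x ∈ Gim, lam ^ 2 := by rw [Finset.sum_const, nsmul_eq_mul]
        _ ≤ ∑ x ∈ Gim, (((shiftInter B x).card : ℝ)) ^ 2 := by
            apply Finset.sum_le_sum
            intro x hx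
            have := (hG3 x (by rw [hGimDef] at hx; exact hx)).1
            exact pow_le_pow_left₀ hlampos.le this 2
        _ = (U.card : ℝ) := hUeq.symm
        _ ≤ (T.card : ℝ) := hUT
    rw [hE]
    have heq : lam * ((Gc j).card : ℝ) / (2 * (B.card : ℝ) ^ 3)
        = (lam * ((Gc j).card : ℝ) / 2) / (B.card : ℝ) ^ 3 := by ring
    rw [heq]
    exact (div_le_div_iff_of_pos_right (pow_pos hn0 3)).2 hTlow
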